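/- Let w be a twisted involution and i ∈ B. Then ℓ((s i)* · w · (s i)) = ℓ(w) if and only if (s i)* · w · (s i) = w. -/

import Mathlib

/-!
Common setup: twisted Coxeter systems, involution words, braid/half-braid moves.
-/

noncomputable section
open scoped Classical

namespace TwistedCoxeter

variable {B : Type*} {W : Type*} [Group W] {M : CoxeterMatrix B}

/-- A twisting of a Coxeter system: a group automorphism `auto` of `W` with `auto ∘ auto = id`
together with an involution `star` of the index set, compatible on simple reflections. -/
structure Twisting (cs : CoxeterSystem M W) where
  auto : W →* W
  star : B → B
  auto_auto : ∀ w, auto (auto w) = w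
  star_star : ∀ i, star (star i) = i
  auto_simple : ∀ i, auto (cs.simple i) = cs.simple (star i)

/-- The trivial twisting. -/
def trivialTwisting (cs : CoxeterSystem M W) : Twisting cs where
  auto := MonoidHom.id W
  star := id
  auto_auto _ := rfl
  star_star _ := rfl
  auto_simple _ := rfl

variable {cs : CoxeterSystem M W}

/-- `w` is a twisted involution: `w* = w⁻¹`. -/
def IsTwistedInvolution (t : Twisting cs) (w : W) : Prop := t.auto w = w⁻¹

/-- One step of the recursion defining `iota`. -/
def invStep (t : Twisting cs) (z : W) (i : B) : W :=
  if cs.length (z * cs.simple i) < cs.length z then z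
  else if t.auto (cs.simple i) * z * cs.simple i = z then z * cs.simple i
  else t.auto (cs.simple i) * z * cs.simple i

/-- The twisted involution obtained from a word, via the "demazure-like" recursion
`ι([]) = 1`, `ι(a ++ [i]) = invStep (ι a) i`. -/
def iota (t : Twisting cs) (a : List B) : W := a.foldl (invStep t) 1

/-- `a` is an involution word for `w`: `ι(a) = w` and `a` has minimal length among
all words with this property. -/
def IsInvolutionWord (t : Twisting cs) (w : W) (a : List B) : Prop :=
  iota t a = w ∧ ∀ b : List B, iota t b = w → a.length ≤ b.length

/-- The set `R̂(w)` of involution words for `w`. -/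
def invWords (t : Twisting cs) (w : W) : Set (List B) := {a | IsInvolutionWord t w a}

/-- `ℓ̂(w)`: the minimal length of a word `a` with `ι(a) = w`. -/
def hatLength (t : Twisting cs) (w : W) : ℕ :=
  sInf {n | ∃ a : List B, iota t a = w ∧ a.length = n}

/-- The alternating word `[i, j, i, j, ...]` of length `m` (starting with `i`). -/
def altWord (i j : B) : ℕ → List B
  | 0 => []
  | n + 1 => i :: altWord j i n

/-- Words `a` and `b` differ by a braid move. -/
def BraidMove (M : CoxeterMatrix B) (a b : List B) : Prop :=
  ∃ (u v : List B) (i j : B), i ≠ j ∧ M i j ≠ 0 ∧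
    a = u ++ altWord i j (M i j) ++ v ∧ b = u ++ altWord j i (M i j) ++ v

/-- The quantity `m_*(i,j)`. -/
def mstar (t : Twisting cs) (i j : B) : ℕ :=
  if M i j ≠ 0 ∧ M i j % 2 = 1 ∧ ({t.star i, t.star j} : Set B) = {i, j} then
    (M i j + 1) / 2
  else if M i j ≠ 0 ∧ M i j % 2 = 0 ∧ t.star i = i ∧ t.star j = j then
    M i j / 2 + 1
  else if M i j ≠ 0 ∧ M i j % 2 = 0 ∧ t.star i = j then
    M i j / 2
  else M i j

/-- Words `a` and `b` differ by a half-braid move. -/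
def HalfBraidMove (t : Twisting cs) (a b : List B) : Prop :=
  ∃ (v : List B) (i j : B), i ≠ j ∧ M i j ≠ 0 ∧ mstar t i j < M i j ∧
    a = altWord i j (mstar t i j) ++ v ∧ b = altWord j i (mstar t i j) ++ v

/-- Words `a` and `b` differ by a generalized half-braid move. -/
def GenHalfBraidMove (t : Twisting cs) (a b : List B) : Prop :=
  ∃ (r v : List B) (i j : B) (m : ℕ), i ≠ j ∧ 1 ≤ m ∧
    a = r ++ altWord i j m ++ v ∧ b = r ++ altWord j i m ++ v ∧
    ∃ z : W, IsTwistedInvolution t z ∧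
      IsInvolutionWord t z (r ++ altWord i j m) ∧ IsInvolutionWord t z (r ++ altWord j i m)

/-- `S` is an equivalence class of the equivalence relation on words generated by the
(symmetric) move relation `E`: any two elements of `S` are connected by a finite chain of
moves, and `S` is closed under moves. -/
def IsMoveClass (E : List B → List B → Prop) (S : Set (List B)) : Prop :=
  (∀ a ∈ S, ∀ b ∈ S, Relation.ReflTransGen E a b) ∧
  (∀ a ∈ S, ∀ b, E a b → b ∈ S)

/-- The twisted Coxeter system is perfectly braided if each `R̂(w)`, for `w` a twisted
involution, is an equivalence class of the relation generated by braid moves and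
half-braid moves. -/
def PerfectlyBraided (t : Twisting cs) : Prop :=
  ∀ w : W, IsTwistedInvolution t w →
    IsMoveClass (fun a b => BraidMove M a b ∨ HalfBraidMove t a b) (invWords t w)

end TwistedCoxeter

namespace CoxAux

open CoxeterSystem List

variable {B : Type*} {W : Type*} [Group W] {M : CoxeterMatrix B} (cs : CoxeterSystem M W)

/-- The sign/reflection representation: `i` acts on `W × ℤˣ` by conjugating the first
coordinate by `sᵢ` and flipping the sign when the first coordinate is `sᵢ`. -/
def reflFlip (i : B) : Equiv.Perm (W × ℤˣ) :=
  Function.Involutive.toPerm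
    (fun x => (cs.simple i * x.1 * cs.simple i, if x.1 = cs.simple i then -x.2 else x.2))
    (by
      rintro ⟨t, ε⟩
      have h1 : ∀ u : W, cs.simple i * (cs.simple i * u * cs.simple i) * cs.simple i = u := by
        intro u
        simp [mul_assoc, cs.simple_mul_simple_cancel_left, cs.simple_mul_simple_self]
      have h2 : (cs.simple i * t * cs.simple i = cs.simple i) ↔ t = cs.simple i := by
        constructor
        · intro h
          have := congrArg (fun u => cs.simple i * u * cs.simple i) h
          rw [h1 t] at this
          rw [this]
          simp [mul_assoc, cs.simple_mul_simple_self]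
        · intro h
          rw [h]
          simp [mul_assoc, cs.simple_mul_simple_self, cs.simple_mul_simple_cancel_left]
      by_cases ht : t = cs.simple i
      · simp [ht, h1, h2, cs.simple_mul_simple_self, mul_assoc,
          cs.simple_mul_simple_cancel_left]
      · have : ¬ (cs.simple i * t * cs.simple i = cs.simple i) := fun h => ht (h2.mp h)
        simp [ht, h1, this])

theorem ris_cons (i : B) (ω : List B) :
    cs.rightInvSeq (i :: ω) =
      ((cs.wordProd ω)⁻¹ * cs.simple i * cs.wordProd ω) :: cs.rightInvSeq ω := rfl

/-- The fundamental formula for products of `reflFlip`s. -/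
theorem prod_map_reflFlip (ω : List B) (t : W) (ε : ℤˣ) :
    (ω.map (reflFlip cs)).prod (t, ε) =
      (cs.wordProd ω * t * (cs.wordProd ω)⁻¹,
        (-1 : ℤˣ) ^ ((cs.rightInvSeq ω).count t) * ε) := by
  induction ω with
  | nil => simp
  | cons i ω ih =>
    rw [map_cons, prod_cons, Equiv.Perm.mul_apply, ih]
    have happ : ∀ (u : W) (δ : ℤˣ), (reflFlip cs) i (u, δ) =
        (cs.simple i * u * cs.simple i, if u = cs.simple i then -δ else δ) := fun u δ => rfl
    rw [happ]
    have hfst : cs.simple i * (cs.wordProd ω * t * (cs.wordProd ω)⁻¹) * cs.simple i =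
        cs.wordProd (i :: ω) * t * (cs.wordProd (i :: ω))⁻¹ := by
      rw [cs.wordProd_cons, mul_inv_rev, cs.inv_simple]
      group
    have hcond : (cs.wordProd ω * t * (cs.wordProd ω)⁻¹ = cs.simple i) ↔
        t = (cs.wordProd ω)⁻¹ * cs.simple i * cs.wordProd ω := by
      constructor
      · intro h; rw [← h]; group
      · intro h; rw [h]; group
    rw [ris_cons]
    by_cases h : t = (cs.wordProd ω)⁻¹ * cs.simple i * cs.wordProd ω
    · rw [if_pos (hcond.mpr h), hfst]
      have : ((cs.wordProd ω)⁻¹ * cs.simple i * cs.wordProd ω :: cs.rightInvSeq ω).count t =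
          (cs.rightInvSeq ω).count t + 1 := by
        rw [h]; exact List.count_cons_self
      rw [this, pow_succ]
      rw [Prod.mk.injEq]
      refine ⟨rfl, ?_⟩
      rw [mul_assoc, neg_one_mul, mul_neg]
    · rw [if_neg (fun hh => h (hcond.mp hh)), hfst]
      have : ((cs.wordProd ω)⁻¹ * cs.simple i * cs.wordProd ω :: cs.rightInvSeq ω).count t =
          (cs.rightInvSeq ω).count t := by
        rw [List.count_cons_of_ne (Ne.symm h)]
      rw [this]

variable (i j : B)

theorem simple_mul_zpow (z : ℤ) :
    cs.simple j * (cs.simple i * cs.simple j) ^ z =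
      (cs.simple i * cs.simple j) ^ (-z) * cs.simple j := by
  have hconj : (MulAut.conj (cs.simple j)) (cs.simple i * cs.simple j) =
      (cs.simple i * cs.simple j)⁻¹ := by
    rw [MulAut.conj_apply, cs.inv_simple, mul_inv_rev, cs.inv_simple, cs.inv_simple]
    simp [mul_assoc, cs.simple_mul_simple_self, cs.simple_mul_simple_cancel_left]
  have h1 : (MulAut.conj (cs.simple j)) ((cs.simple i * cs.simple j) ^ z) =
      (cs.simple i * cs.simple j) ^ (-z) := by
    rw [map_zpow, hconj, inv_zpow, ← zpow_neg]
  rw [MulAut.conj_apply, cs.inv_simple] at h1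
  calc cs.simple j * (cs.simple i * cs.simple j) ^ z
      = (cs.simple j * (cs.simple i * cs.simple j) ^ z * cs.simple j) * cs.simple j := by
        simp [mul_assoc, cs.simple_mul_simple_self]
    _ = (cs.simple i * cs.simple j) ^ (-z) * cs.simple j := by rw [h1]

theorem alt_word_split (m : ℕ) :
    CoxeterSystem.alternatingWord i j (2 * (m + 1)) =
      i :: j :: CoxeterSystem.alternatingWord i j (2 * m) := by
  rw [show 2 * (m + 1) = (2 * m + 1) + 1 by ring, CoxeterSystem.alternatingWord_succ',
    CoxeterSystem.alternatingWord_succ']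
  have h1 : ¬ Even (2 * m + 1) := by simp [Nat.even_add_one]
  have h2 : Even (2 * m) := even_two_mul m
  simp [h1, h2]

theorem prod_alt_even (m : ℕ) :
    cs.wordProd (CoxeterSystem.alternatingWord i j (2 * m)) =
      (cs.simple i * cs.simple j) ^ m := by
  rw [cs.prod_alternatingWord_eq_mul_pow]
  have h2 : Even (2 * m) := even_two_mul m
  simp [h2, Nat.mul_div_cancel_left m (by norm_num : 0 < 2)]

theorem alg2 (z : ℤ) :
    ((cs.simple i * cs.simple j) ^ z)⁻¹ * cs.simple j * (cs.simple i * cs.simple j) ^ z =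
      (cs.simple i * cs.simple j) ^ (-2 * z) * cs.simple j := by
  rw [mul_assoc, simple_mul_zpow, ← mul_assoc, ← zpow_neg, ← zpow_add,
    show -z + -z = -2 * z by ring]

theorem alg1 (z : ℤ) :
    (cs.simple j * (cs.simple i * cs.simple j) ^ z)⁻¹ * cs.simple i *
        (cs.simple j * (cs.simple i * cs.simple j) ^ z) =
      (cs.simple i * cs.simple j) ^ (-2 * z - 1) * cs.simple j := by
  have e2 : cs.simple j * cs.simple i = (cs.simple i * cs.simple j) ^ (-1 : ℤ) := by
    rw [zpow_neg, zpow_one, mul_inv_rev, cs.inv_simple, cs.inv_simple]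
  calc (cs.simple j * (cs.simple i * cs.simple j) ^ z)⁻¹ * cs.simple i *
        (cs.simple j * (cs.simple i * cs.simple j) ^ z)
      = ((cs.simple i * cs.simple j) ^ z)⁻¹ *
          ((cs.simple j * cs.simple i) * (cs.simple j * (cs.simple i * cs.simple j) ^ z)) := by
        rw [mul_inv_rev, cs.inv_simple]
        group
    _ = ((cs.simple i * cs.simple j) ^ z)⁻¹ * ((cs.simple i * cs.simple j) ^ (-1 : ℤ) *
          ((cs.simple i * cs.simple j) ^ (-z) * cs.simple j)) := by
        rw [e2, simple_mul_zpow]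
    _ = (cs.simple i * cs.simple j) ^ (-z + -1 + -z) * cs.simple j := by
        rw [← zpow_neg, ← mul_assoc, ← zpow_add, ← mul_assoc, ← zpow_add]
    _ = (cs.simple i * cs.simple j) ^ (-2 * z - 1) * cs.simple j := by
        rw [show -z + (-1 : ℤ) + -z = -2 * z - 1 by ring]

theorem ris_alt (m : ℕ) :
    cs.rightInvSeq (CoxeterSystem.alternatingWord i j (2 * m)) =
      (List.range (2 * m)).map
        (fun (k : ℕ) =>
          (cs.simple i * cs.simple j) ^ ((k : ℤ) + 1 - 2 * (m : ℤ)) * cs.simple j) := by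
  induction m with
  | zero => simp [CoxeterSystem.alternatingWord]
  | succ m ih =>
    rw [alt_word_split, ris_cons, ris_cons, ih, cs.wordProd_cons, prod_alt_even]
    rw [show 2 * (m + 1) = (2 * m + 1) + 1 by ring, List.range_succ_eq_map,
      List.range_succ_eq_map]
    simp only [List.map_cons, List.map_map]
    congr 1
    · rw [← zpow_natCast (cs.simple i * cs.simple j) m, alg1]
      rw [show -2 * (m : ℤ) - 1 = ((0 : ℕ) : ℤ) + 1 - 2 * ((m + 1 : ℕ) : ℤ) by push_cast; ring]
    congr 1
    · rw [← zpow_natCast (cs.simple i * cs.simple j) m, alg2]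
      rw [show -2 * (m : ℤ) = ((Nat.succ 0 : ℕ) : ℤ) + 1 - 2 * ((m + 1 : ℕ) : ℤ) by
        push_cast; ring]
    · apply List.map_congr_left
      intro k hk
      simp only [Function.comp_apply]
      congr 2
      push_cast [Nat.succ_eq_add_one]
      ring

theorem reflFlip_liftable : M.IsLiftable (fun i => (reflFlip cs) i) := by
  intro i j
  have hpow : ∀ n : ℕ, ((reflFlip cs) i * (reflFlip cs) j) ^ n =
      ((CoxeterSystem.alternatingWord i j (2 * n)).map (reflFlip cs)).prod := by
    intro n
    induction n with
    | zero => simp [CoxeterSystem.alternatingWord]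
    | succ n ih =>
      rw [alt_word_split, List.map_cons, List.map_cons, prod_cons, prod_cons, pow_succ', ih,
        mul_assoc]
  rw [hpow]
  apply Equiv.ext
  rintro ⟨t, ε⟩
  rw [prod_map_reflFlip]
  set q := cs.simple i * cs.simple j with hq
  have hq1 : q ^ (M i j) = 1 := cs.simple_mul_simple_pow i j
  have hq1z : q ^ ((M i j : ℕ) : ℤ) = 1 := by rw [zpow_natCast]; exact hq1
  have hπ : cs.wordProd (CoxeterSystem.alternatingWord i j (2 * M i j)) = 1 := by
    rw [prod_alt_even]; exact hq1
  have hcount : Even ((cs.rightInvSeq (CoxeterSystem.alternatingWord i j (2 * M i j))).count t) := by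
    rw [ris_alt]
    set f : ℕ → W := fun (k : ℕ) => q ^ ((k : ℤ) + 1 - 2 * (M i j : ℤ)) * cs.simple j with hf
    rw [show 2 * M i j = M i j + M i j from two_mul _, List.range_add, List.map_append,
      List.count_append, List.map_map]
    have : (List.map (f ∘ fun x => M i j + x) (List.range (M i j))) =
        List.map f (List.range (M i j)) := by
      apply List.map_congr_left
      intro k hk
      simp only [Function.comp_apply, hf]
      rw [show ((M i j + k : ℕ) : ℤ) + 1 - 2 * (M i j : ℤ) =
        ((M i j : ℕ) : ℤ) + ((k : ℤ) + 1 - 2 * (M i j : ℤ)) by push_cast; ring]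
      rw [zpow_add, hq1z, one_mul]
    rw [this]
    exact ⟨(List.map f (List.range (M i j))).count t, rfl⟩
  rw [hπ]
  simp [Even.neg_one_pow hcount]

/-- The lifted representation. -/
def sgnRep : W →* Equiv.Perm (W × ℤˣ) := cs.lift ⟨fun i => (reflFlip cs) i, reflFlip_liftable cs⟩

theorem prod_map_eq_sgnRep (ω : List B) :
    (ω.map (reflFlip cs)).prod = sgnRep cs (cs.wordProd ω) := by
  rw [show cs.wordProd ω = (ω.map cs.simple).prod from rfl, MonoidHom.map_list_prod,
    List.map_map]
  congr 1
  apply List.map_congr_left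
  intro k _
  simp only [Function.comp_apply]
  exact (cs.lift_apply_simple (reflFlip_liftable cs) k).symm

theorem count_parity {ω ω' : List B} (h : cs.wordProd ω = cs.wordProd ω') (t : W) :
    ((-1 : ℤˣ)) ^ ((cs.rightInvSeq ω).count t) = (-1) ^ ((cs.rightInvSeq ω').count t) := by
  have hE : (ω.map (reflFlip cs)).prod = (ω'.map (reflFlip cs)).prod := by
    rw [prod_map_eq_sgnRep, prod_map_eq_sgnRep, h]
  have := congrArg (fun p : Equiv.Perm (W × ℤˣ) => (p (t, 1)).2) hE
  rw [prod_map_reflFlip, prod_map_reflFlip] at this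
  simpa using this

/-- The exchange condition (for simple reflections). -/
theorem exchange {ω : List B} (_hω : cs.IsReduced ω) {j : B}
    (h : cs.IsLeftDescent (cs.wordProd ω) j) : cs.simple j ∈ cs.leftInvSeq ω := by
  obtain ⟨ω', hω', hw'⟩ := cs.exists_reduced_word' (cs.simple j * cs.wordProd ω)
  have hcons : cs.wordProd (j :: ω') = cs.wordProd ω := by
    rw [cs.wordProd_cons, ← hw', cs.simple_mul_simple_cancel_left]
  have hrev : cs.wordProd ω.reverse = cs.wordProd ((j :: ω').reverse) := by
    rw [cs.wordProd_reverse, cs.wordProd_reverse, hcons]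
  have hpar := count_parity cs hrev (cs.simple j)
  rw [cs.rightInvSeq_reverse, cs.rightInvSeq_reverse, List.count_reverse, List.count_reverse]
    at hpar
  have h0 : (cs.leftInvSeq ω').count (cs.simple j) = 0 := by
    rw [List.count_eq_zero]
    intro hmem
    have hinv := cs.isLeftInversion_of_mem_leftInvSeq hω' hmem
    have h2 := hinv.2
    rw [← hw', cs.simple_mul_simple_cancel_left] at h2
    exact absurd h h2.asymm
  have hl : cs.leftInvSeq (j :: ω') =
      cs.simple j :: (cs.leftInvSeq ω').map (MulAut.conj (cs.simple j)) := rfl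
  have hfix : (MulAut.conj (cs.simple j)) (cs.simple j) = cs.simple j := by
    simp [MulAut.conj_apply, mul_assoc, cs.simple_mul_simple_self]
  have hcnt : (cs.leftInvSeq (j :: ω')).count (cs.simple j) = 1 := by
    rw [hl, List.count_cons_self]
    have hcm := List.count_map_of_injective (cs.leftInvSeq ω') (⇑(MulAut.conj (cs.simple j)))
      (MulAut.conj (cs.simple j)).injective (cs.simple j)
    rw [hfix] at hcm
    rw [hcm, h0]
  rw [hcnt] at hpar
  by_contra hmem
  rw [List.count_eq_zero.mpr hmem] at hpar
  norm_num at hpar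

/-- The lifting lemma. -/
theorem lifting (u : W) (iR jL : B)
    (h1 : cs.length (u * cs.simple iR) = cs.length u + 1)
    (h2 : cs.length (cs.simple jL * u) = cs.length u + 1)
    (h3 : cs.length (cs.simple jL * (u * cs.simple iR)) < cs.length (u * cs.simple iR)) :
    cs.simple jL * u * cs.simple iR = u := by
  obtain ⟨ω, hred, rfl⟩ := cs.exists_reduced_word' u
  have hredhat : cs.IsReduced (ω.concat iR) := by
    show cs.length (cs.wordProd (ω.concat iR)) = (ω.concat iR).length
    rw [cs.wordProd_concat, h1, hred, List.length_concat]
  have hdesc : cs.IsLeftDescent (cs.wordProd (ω.concat iR)) jL := by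
    show cs.length (cs.simple jL * cs.wordProd (ω.concat iR)) < cs.length (cs.wordProd (ω.concat iR))
    rw [cs.wordProd_concat]
    exact h3
  have hmem := exchange cs hredhat hdesc
  obtain ⟨⟨k, hk⟩, hget⟩ := List.mem_iff_get.mp hmem
  have hk' : k < ω.length + 1 := by simpa using hk
  have hg : (cs.leftInvSeq (ω.concat iR)).getD k 1 = cs.simple jL := by
    rw [List.getD_eq_getElem _ _ hk]
    exact hget
  have heq : cs.simple jL * (cs.wordProd ω * cs.simple iR) =
      cs.wordProd ((ω.concat iR).eraseIdx k) := by
    have h5 := cs.getD_leftInvSeq_mul_wordProd (ω.concat iR) k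
    rw [hg, cs.wordProd_concat] at h5
    rw [← mul_assoc] at h5 ⊢
    exact h5
  rcases Nat.lt_or_ge k ω.length with hlt | hge
  · exfalso
    have hER : (ω.concat iR).eraseIdx k = (ω.eraseIdx k) ++ [iR] := by
      rw [List.concat_eq_append]
      exact List.eraseIdx_append_of_lt_length hlt _
    rw [hER, cs.wordProd_append, cs.wordProd_singleton] at heq
    have heq2 : cs.simple jL * cs.wordProd ω = cs.wordProd (ω.eraseIdx k) := by
      have := heq
      rw [← mul_assoc] at this
      exact mul_right_cancel this
    have hlen := cs.length_wordProd_le (ω.eraseIdx k)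
    rw [← heq2] at hlen
    have hlenER : (ω.eraseIdx k).length + 1 = ω.length :=
      List.length_eraseIdx_add_one hlt
    rw [h2, hred] at hlen
    omega
  · have hke : k = ω.length := by omega
    have hER : (ω.concat iR).eraseIdx k = ω := by
      rw [hke, List.concat_eq_append, List.eraseIdx_append_of_length_le (le_refl _)]
      simp
    rw [hER] at heq
    rw [← mul_assoc] at heq
    exact heq

end CoxAux


namespace TwistedCoxeter

variable {B : Type*} {W : Type*} [Group W] {M : CoxeterMatrix B} {cs : CoxeterSystem M W}

theorem auto_wordProd (t : Twisting cs) (ω : List B) :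
    t.auto (cs.wordProd ω) = cs.wordProd (ω.map t.star) := by
  rw [show cs.wordProd ω = (ω.map cs.simple).prod from rfl,
    show cs.wordProd (ω.map t.star) = ((ω.map t.star).map cs.simple).prod from rfl,
    MonoidHom.map_list_prod, List.map_map, List.map_map]
  congr 1
  apply List.map_congr_left
  intro i _
  exact t.auto_simple i

theorem length_auto (t : Twisting cs) (w : W) : cs.length (t.auto w) = cs.length w := by
  have key : ∀ v : W, cs.length (t.auto v) ≤ cs.length v := by
    intro v
    obtain ⟨ω, hred, rfl⟩ := cs.exists_reduced_word' v
    rw [auto_wordProd]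
    calc cs.length (cs.wordProd (ω.map t.star)) ≤ (ω.map t.star).length :=
          cs.length_wordProd_le _
      _ = ω.length := List.length_map _
      _ = cs.length (cs.wordProd ω) := hred.symm
  refine le_antisymm (key w) ?_
  have h2 := key (t.auto w)
  rwa [t.auto_auto] at h2

end TwistedCoxeter

namespace TwistedCoxeter

/-- For a twisted involution `w` and `i ∈ B`, one has
`ℓ((s i)* * w * (s i)) = ℓ(w)` if and only if `(s i)* * w * (s i) = w`. -/
theorem statement_0 {B W : Type*} [Group W] {M : CoxeterMatrix B} {cs : CoxeterSystem M W}
    (t : Twisting cs) (w : W) (hw : IsTwistedInvolution t w) (i : B) :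
    cs.length (t.auto (cs.simple i) * w * cs.simple i) = cs.length w ↔
      t.auto (cs.simple i) * w * cs.simple i = w := by
  have hw' : t.auto w = w⁻¹ := hw
  have hsj : t.auto (cs.simple i) = cs.simple (t.star i) := t.auto_simple i
  set j := t.star i with hj
  have hKey : cs.length (cs.simple j * w) = cs.length (w * cs.simple i) := by
    have h1 : cs.simple j * w = t.auto (cs.simple i * t.auto w) := by
      rw [map_mul, t.auto_auto, hsj]
    rw [h1, length_auto, hw']
    have h2 := cs.length_inv (cs.simple i * w⁻¹)
    rw [mul_inv_rev, inv_inv, cs.inv_simple] at h2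
    exact h2.symm
  constructor
  · intro hL
    rw [hsj] at hL ⊢
    rcases cs.length_mul_simple w i with hc | hc
    · have h2' : cs.length (cs.simple j * w) = cs.length w + 1 := by rw [hKey, hc]
      have h3' : cs.length (cs.simple j * (w * cs.simple i)) < cs.length (w * cs.simple i) := by
        rw [show cs.simple j * (w * cs.simple i) = cs.simple j * w * cs.simple i from
          (mul_assoc _ _ _).symm, hL, hc]
        omega
      exact CoxAux.lifting cs w i j hc h2' h3'
    · have hlen_sjw : cs.length (cs.simple j * w) + 1 = cs.length w := by rw [hKey]; exact hc
      have h1' : cs.length ((cs.simple j * w) * cs.simple i) = cs.length (cs.simple j * w) + 1 := by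
        rw [show (cs.simple j * w) * cs.simple i = cs.simple j * w * cs.simple i from rfl, hL]
        omega
      have h2' : cs.length (cs.simple j * (cs.simple j * w)) =
          cs.length (cs.simple j * w) + 1 := by
        rw [cs.simple_mul_simple_cancel_left]
        omega
      have h3' : cs.length (cs.simple j * ((cs.simple j * w) * cs.simple i)) <
          cs.length ((cs.simple j * w) * cs.simple i) := by
        rw [show cs.simple j * ((cs.simple j * w) * cs.simple i) = w * cs.simple i by
          rw [← mul_assoc, ← mul_assoc, cs.simple_mul_simple_self, one_mul]]
        rw [show (cs.simple j * w) * cs.simple i = cs.simple j * w * cs.simple i from rfl, hL]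
        omega
      have hres := CoxAux.lifting cs (cs.simple j * w) i j h1' h2' h3'
      rw [show cs.simple j * (cs.simple j * w) * cs.simple i = w * cs.simple i by
        rw [cs.simple_mul_simple_cancel_left]] at hres
      rw [show cs.simple j * w * cs.simple i = (cs.simple j * w) * cs.simple i from rfl, ← hres,
        cs.simple_mul_simple_cancel_right]
  · intro h
    rw [h]


end TwistedCoxeter
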